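/- Fix integers r ≥ 1, l ≥ 1, data points x_1, …, x_N ∈ ℝ^r partitioned into nonempty clusters X_1, …, X_l of sizes N_1, …, N_l (∑_m N_m = N); for each m fix μ_m ∈ ℝ^r and a symmetric positive definite r×r matrix Σ_m, and for x_n ∈ X_m set δ_n = (x_n − μ_m)ᵀΣ_m⁻¹(x_n − μ_m) and w_n(ν) = (ν + r)/(ν + δ_n); set q = r(r+3)/2. Define BIC_{t_ν}(M_l) = ∑_{m=1}^l N_m log N_m − ∑_{m=1}^l (N_m/2) log det Σ_m + ∑_{m=1}^l N_m log[Γ((ν+r)/2)/(Γ(ν/2)(πν)^{r/2})] − (1/2)∑_{m=1}^l ∑_{x_n∈X_m} (ν + r) log(1 + δ_n/ν) − (q/2)∑_{m=1}^l log max(∑_{x_n∈X_m} w_n(ν)², N_m). Then, as ν → ∞ (ν ranging over positive reals), BIC_{t_ν}(M_l) converges to ∑_{m=1}^l N_m log N_m − ∑_{m=1}^l (N_m/2) log det Σ_m − (q/2)∑_{m=1}^l log N_m − (Nr/2)·log(2π) − (1/2)∑_{m=1}^l ∑_{x_n∈X_m} δ_n. If moreover each Σ_m equals the cluster sample scatter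 (1/N_m)∑_{x_n∈X_m}(x_n − μ_m)(x_n − μ_m)ᵀ, the last two terms equal the model-independent constant −(Nr/2)(log(2π) + 1), so the limit equals the Gaussian criterion BIC_N(M_l) = ∑_m N_m log N_m − ∑_m (N_m/2) log det Σ_m − (q/2)∑_m log N_m up to this additive constant. -/

import Mathlib

open Filter Matrix BigOperators


lemma aux_quot (a b : ℝ) : Tendsto (fun s : ℝ => (s + a) / (s + b)) atTop (nhds 1) := by
  have h0 : Tendsto (fun s : ℝ => (a - b) / (s + b)) atTop (nhds 0) :=
    tendsto_const_nhds.div_atTop (tendsto_atTop_add_const_right _ b tendsto_id)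
  have h1 : Tendsto (fun s : ℝ => 1 + (a - b) / (s + b)) atTop (nhds 1) := by
    simpa using tendsto_const_nhds.add h0
  refine h1.congr' ?_
  filter_upwards [eventually_gt_atTop (-b)] with s hs
  have hsb : s + b ≠ 0 := by linarith
  field_simp
  ring

lemma aux_half : Tendsto
    (fun s : ℝ => Real.Gamma (s + 1/2) / (Real.Gamma s * s ^ ((1:ℝ)/2)))
    atTop (nhds 1) := by
  set L : ℝ → ℝ := fun s =>
    Real.log (Real.Gamma (s + 1/2)) - (Real.log (Real.Gamma s) + (1/2) * Real.log s) with hL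
  have hLlim : Tendsto L atTop (nhds 0) := by
    have hlo : Tendsto (fun s : ℝ => (1/2) * Real.log ((s + 0) / (s + 1/2))) atTop (nhds 0) := by
      have := ((Real.continuousAt_log one_ne_zero).tendsto.comp (aux_quot 0 (1/2))).const_mul (1/2 : ℝ)
      simpa using this
    refine tendsto_of_tendsto_of_tendsto_of_le_of_le' hlo tendsto_const_nhds ?_ ?_
    · filter_upwards [eventually_gt_atTop 0] with s hs
      have h1 : (0:ℝ) < s + 1/2 := by linarith
      have h2 : (0:ℝ) < s + 3/2 := by linarith
      have hconv := Real.convexOn_log_Gamma.2 (Set.mem_Ioi.mpr h1) (Set.mem_Ioi.mpr h2)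
        (by norm_num : (0:ℝ) ≤ 1/2) (by norm_num : (0:ℝ) ≤ 1/2) (by norm_num)
      have hmid : (1/2 : ℝ) • (s + 1/2) + (1/2 : ℝ) • (s + 3/2) = s + 1 := by
        simp [smul_eq_mul]; ring
      rw [hmid] at hconv
      simp only [Function.comp_apply, smul_eq_mul] at hconv
      have hG1 : Real.Gamma (s + 1) = s * Real.Gamma s := Real.Gamma_add_one hs.ne'
      have hG2 : Real.Gamma (s + 3/2) = (s + 1/2) * Real.Gamma (s + 1/2) := by
        have := Real.Gamma_add_one h1.ne'
        rw [show s + 1/2 + 1 = s + 3/2 by ring] at this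
        exact this
      have hGs : (0:ℝ) < Real.Gamma s := Real.Gamma_pos_of_pos hs
      have hGh : (0:ℝ) < Real.Gamma (s + 1/2) := Real.Gamma_pos_of_pos h1
      rw [hG1, hG2, Real.log_mul hs.ne' hGs.ne', Real.log_mul h1.ne' hGh.ne'] at hconv
      have hlogdiv : Real.log ((s + 0)/(s + 1/2)) = Real.log s - Real.log (s + 1/2) := by
        rw [add_zero, Real.log_div hs.ne' h1.ne']
      rw [hL]
      simp only
      rw [hlogdiv]
      linarith
    · filter_upwards [eventually_gt_atTop 0] with s hs
      have h1 : (0:ℝ) < s + 1 := by linarith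
      have hconv := Real.convexOn_log_Gamma.2 (Set.mem_Ioi.mpr hs) (Set.mem_Ioi.mpr h1)
        (by norm_num : (0:ℝ) ≤ 1/2) (by norm_num : (0:ℝ) ≤ 1/2) (by norm_num)
      have hmid : (1/2 : ℝ) • s + (1/2 : ℝ) • (s + 1) = s + 1/2 := by
        simp [smul_eq_mul]; ring
      rw [hmid] at hconv
      simp only [Function.comp_apply, smul_eq_mul] at hconv
      have hG1 : Real.Gamma (s + 1) = s * Real.Gamma s := Real.Gamma_add_one hs.ne'
      have hGs : (0:ℝ) < Real.Gamma s := Real.Gamma_pos_of_pos hs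
      rw [hG1, Real.log_mul hs.ne' hGs.ne'] at hconv
      rw [hL]; simp only; linarith
  have hEq : ∀ᶠ s in (atTop : Filter ℝ), Real.exp (L s)
      = Real.Gamma (s + 1/2) / (Real.Gamma s * s ^ ((1:ℝ)/2)) := by
    filter_upwards [eventually_gt_atTop 0] with s hs
    have h1 : (0:ℝ) < s + 1/2 := by linarith
    have hGs : (0:ℝ) < Real.Gamma s := Real.Gamma_pos_of_pos hs
    have hGh : (0:ℝ) < Real.Gamma (s + 1/2) := Real.Gamma_pos_of_pos h1
    have hrp : (0:ℝ) < s ^ ((1:ℝ)/2) := Real.rpow_pos_of_pos hs _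
    rw [hL]
    simp only
    rw [← Real.log_rpow hs, Real.exp_sub, Real.exp_add, Real.exp_log hGs, Real.exp_log hGh,
      Real.exp_log hrp]
  have := (Real.continuous_exp.continuousAt.tendsto.comp hLlim).congr' hEq
  simpa using this

lemma aux_ratio (j : ℕ) : Tendsto
    (fun s : ℝ => Real.Gamma (s + j/2) / (Real.Gamma s * s ^ ((j:ℝ)/2)))
    atTop (nhds 1) := by
  induction j with
  | zero =>
    refine tendsto_const_nhds.congr' ?_
    filter_upwards [eventually_gt_atTop 0] with s hs
    have hGs : (0:ℝ) < Real.Gamma s := Real.Gamma_pos_of_pos hs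
    simp [Real.rpow_zero, div_self hGs.ne']
  | succ j ih =>
    have hshift : Tendsto (fun s : ℝ => s + 1/2) atTop atTop :=
      tendsto_atTop_add_const_right _ _ tendsto_id
    have hj : Tendsto (fun s : ℝ =>
        Real.Gamma ((s + 1/2) + j/2) / (Real.Gamma (s + 1/2) * (s + 1/2) ^ ((j:ℝ)/2)))
        atTop (nhds 1) := ih.comp hshift
    have h3 : Tendsto (fun s : ℝ => ((s + 1/2) / (s + 0)) ^ ((j:ℝ)/2)) atTop (nhds 1) := by
      have := (aux_quot (1/2) 0).rpow_const (Or.inr (by positivity : (0:ℝ) ≤ (j:ℝ)/2))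
      simpa using this
    have hcomb := (hj.mul aux_half).mul h3
    rw [show (1:ℝ) * 1 * 1 = 1 by ring] at hcomb
    refine hcomb.congr' ?_
    filter_upwards [eventually_gt_atTop 0] with s hs
    have h1 : (0:ℝ) < s + 1/2 := by linarith
    have hGs : (0:ℝ) < Real.Gamma s := Real.Gamma_pos_of_pos hs
    have hGh : (0:ℝ) < Real.Gamma (s + 1/2) := Real.Gamma_pos_of_pos h1
    have hp1 : (0:ℝ) < s ^ ((1:ℝ)/2) := Real.rpow_pos_of_pos hs _
    have hp2 : (0:ℝ) < s ^ ((j:ℝ)/2) := Real.rpow_pos_of_pos hs _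
    have hp3 : (0:ℝ) < (s + 1/2) ^ ((j:ℝ)/2) := Real.rpow_pos_of_pos h1 _
    have harg : s + 1/2 + (j:ℝ)/2 = s + ((j:ℕ)+1 : ℕ)/2 := by push_cast; ring
    have hdiv : ((s + 1/2) / (s + 0)) ^ ((j:ℝ)/2)
        = (s + 1/2) ^ ((j:ℝ)/2) / s ^ ((j:ℝ)/2) := by
      rw [add_zero, Real.div_rpow h1.le hs.le]
    have hsplit : s ^ (((j:ℕ)+1 : ℕ) / 2 : ℝ) = s ^ ((1:ℝ)/2) * s ^ ((j:ℝ)/2) := by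
      rw [← Real.rpow_add hs]
      congr 1
      push_cast; ring
    rw [hdiv, ← harg, hsplit]
    field_simp

lemma aux_inner (r : ℕ) : Tendsto
    (fun ν : ℝ => Real.Gamma ((ν + r) / 2) /
      (Real.Gamma (ν / 2) * (Real.pi * ν) ^ ((r : ℝ) / 2)))
    atTop (nhds ((2 * Real.pi) ^ (-((r:ℝ)/2)))) := by
  have hcomp : Tendsto (fun ν : ℝ =>
      Real.Gamma (ν/2 + r/2) / (Real.Gamma (ν/2) * (ν/2) ^ ((r:ℝ)/2)))
      atTop (nhds 1) := (aux_ratio r).comp (tendsto_id.atTop_div_const two_pos)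
  have h := hcomp.mul_const ((2 * Real.pi) ^ (-((r:ℝ)/2)))
  rw [one_mul] at h
  refine h.congr' ?_
  filter_upwards [eventually_gt_atTop 0] with ν hν
  have hν2 : (0:ℝ) < ν/2 := by linarith
  have hGν : (0:ℝ) < Real.Gamma (ν/2) := Real.Gamma_pos_of_pos hν2
  have h2π : (0:ℝ) < 2 * Real.pi := by positivity
  have hmul : (Real.pi * ν) ^ ((r:ℝ)/2)
      = (2 * Real.pi) ^ ((r:ℝ)/2) * (ν/2) ^ ((r:ℝ)/2) := by
    rw [← Real.mul_rpow h2π.le hν2.le]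
    congr 1
    ring
  have hneg : (2 * Real.pi) ^ (-((r:ℝ)/2)) = ((2 * Real.pi) ^ ((r:ℝ)/2))⁻¹ := by
    rw [Real.rpow_neg h2π.le]
  have harg : ν/2 + (r:ℝ)/2 = (ν + r)/2 := by ring
  rw [harg, hmul, hneg]
  have hpa : (0:ℝ) < (2 * Real.pi) ^ ((r:ℝ)/2) := Real.rpow_pos_of_pos h2π _
  have hpb : (0:ℝ) < (ν/2) ^ ((r:ℝ)/2) := Real.rpow_pos_of_pos hν2 _
  field_simp

lemma aux_A3 (r : ℕ) : Tendsto
    (fun ν : ℝ => Real.log (Real.Gamma ((ν + r) / 2) /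
      (Real.Gamma (ν / 2) * (Real.pi * ν) ^ ((r : ℝ) / 2))))
    atTop (nhds (-((r:ℝ)/2) * Real.log (2 * Real.pi))) := by
  have h2π : (0:ℝ) < 2 * Real.pi := by positivity
  have hpos : (0:ℝ) < (2 * Real.pi) ^ (-((r:ℝ)/2)) := Real.rpow_pos_of_pos h2π _
  have h := (Real.continuousAt_log hpos.ne').tendsto.comp (aux_inner r)
  rw [Real.log_rpow h2π] at h
  exact h

lemma aux_B (c a : ℝ) (hc : 0 ≤ c) : Tendsto
    (fun ν : ℝ => (ν + a) * Real.log (1 + c / ν)) atTop (nhds c) := by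
  have h1 : Tendsto (fun ν : ℝ => ν * Real.log (1 + c / ν)) atTop (nhds c) := by
    have hpow := Real.tendsto_one_add_div_rpow_exp c
    have hlog := (Real.continuousAt_log (Real.exp_pos c).ne').tendsto.comp hpow
    rw [Real.log_exp] at hlog
    refine hlog.congr' ?_
    filter_upwards [eventually_gt_atTop 0] with ν hν
    have hb : (0:ℝ) < 1 + c / ν := by positivity
    rw [Function.comp_apply, Real.log_rpow hb, mul_comm]
  have h2 : Tendsto (fun ν : ℝ => Real.log (1 + c / ν)) atTop (nhds 0) := by
    have hq : Tendsto (fun ν : ℝ => 1 + c / ν) atTop (nhds 1) := by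
      simpa using tendsto_const_nhds.add
        (tendsto_const_nhds.div_atTop (tendsto_id : Tendsto (fun ν : ℝ => ν) atTop atTop))
    have := (Real.continuousAt_log one_ne_zero).tendsto.comp hq
    rw [Real.log_one] at this
    exact this
  have h := h1.add (h2.const_mul a)
  rw [show c + a * 0 = c by ring] at h
  refine h.congr fun ν => by ring

lemma aux_trace {r : ℕ} (A : Matrix (Fin r) (Fin r) ℝ) (v : Fin r → ℝ) :
    (A * vecMulVec v v).trace = v ⬝ᵥ (A *ᵥ v) := by
  simp only [Matrix.trace, Matrix.diag, Matrix.mul_apply, vecMulVec_apply, dotProduct,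
    Matrix.mulVec, Finset.mul_sum]
  exact Finset.sum_congr rfl fun i _ => Finset.sum_congr rfl fun j _ => by ring

/-- as the degree of freedom `ν → ∞`, the robust criterion
`BIC_{t_ν}(M_l)` converges to
`∑ₘ Nₘ log Nₘ − ∑ₘ (Nₘ/2) log det Σₘ − (q/2)∑ₘ log Nₘ − (Nr/2)·log(2π) − (1/2)∑ₘ∑ₙ δₙ`;
moreover, if each `Σₘ` is the cluster sample scatter, the last two terms equal the
model-independent constant `−(Nr/2)(log(2π)+1)`, so the limit equals the Gaussian
criterion `BIC_N(M_l)` up to this additive constant. -/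
theorem BICt_tendsto_BICN
    (r l : ℕ) (hr : 1 ≤ r) (hl : 1 ≤ l)
    (Nm : Fin l → ℕ) (hNm : ∀ m, 1 ≤ Nm m)
    (x : (m : Fin l) → Fin (Nm m) → Fin r → ℝ)
    (μ : Fin l → Fin r → ℝ)
    (S : Fin l → Matrix (Fin r) (Fin r) ℝ) (hS : ∀ m, (S m).PosDef)
    (N : ℕ) (hN : N = ∑ m, Nm m)
    (q : ℝ) (hq : q = (r : ℝ) * ((r : ℝ) + 3) / 2)
    (δ : (m : Fin l) → Fin (Nm m) → ℝ)
    (hδ : ∀ m n, δ m n = (x m n - μ m) ⬝ᵥ ((S m)⁻¹ *ᵥ (x m n - μ m)))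
    (w : ℝ → (m : Fin l) → Fin (Nm m) → ℝ)
    (hw : ∀ ν m n, w ν m n = (ν + r) / (ν + δ m n)) :
    Tendsto (fun ν : ℝ =>
        (∑ m, (Nm m : ℝ) * Real.log (Nm m))
        - (∑ m, ((Nm m : ℝ) / 2) * Real.log (S m).det)
        + (∑ m, (Nm m : ℝ) *
            Real.log (Real.Gamma ((ν + r) / 2) /
              (Real.Gamma (ν / 2) * (Real.pi * ν) ^ ((r : ℝ) / 2))))
        - (1 / 2) * (∑ m, ∑ n, (ν + r) * Real.log (1 + δ m n / ν))
        - (q / 2) * (∑ m, Real.log (max (∑ n, (w ν m n) ^ 2) (Nm m : ℝ))))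
      atTop
      (nhds ((∑ m, (Nm m : ℝ) * Real.log (Nm m))
        - (∑ m, ((Nm m : ℝ) / 2) * Real.log (S m).det)
        - (q / 2) * (∑ m, Real.log (Nm m : ℝ))
        - ((N : ℝ) * r / 2) * Real.log (2 * Real.pi)
        - (1 / 2) * (∑ m, ∑ n, δ m n))) ∧
    ((∀ m, S m = ((Nm m : ℝ))⁻¹ •
          ∑ n, vecMulVec (x m n - μ m) (x m n - μ m)) →
      ((∑ m, (Nm m : ℝ) * Real.log (Nm m))
        - (∑ m, ((Nm m : ℝ) / 2) * Real.log (S m).det)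
        - (q / 2) * (∑ m, Real.log (Nm m : ℝ))
        - ((N : ℝ) * r / 2) * Real.log (2 * Real.pi)
        - (1 / 2) * (∑ m, ∑ n, δ m n))
      = ((∑ m, (Nm m : ℝ) * Real.log (Nm m))
        - (∑ m, ((Nm m : ℝ) / 2) * Real.log (S m).det)
        - (q / 2) * (∑ m, Real.log (Nm m : ℝ)))
        - ((N : ℝ) * r / 2) * (Real.log (2 * Real.pi) + 1)) := by
  have hNcast : (N : ℝ) = ∑ m, (Nm m : ℝ) := by rw [hN]; push_cast; rfl
  constructor
  · -- the limit
    have hδ0 : ∀ m n, 0 ≤ δ m n := fun m n => by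
      rw [hδ m n]
      simpa using ((hS m).inv).posSemidef.re_dotProduct_nonneg (x m n - μ m)
    have hA : Tendsto (fun ν : ℝ => ∑ m, (Nm m : ℝ) *
        Real.log (Real.Gamma ((ν + r) / 2) /
          (Real.Gamma (ν / 2) * (Real.pi * ν) ^ ((r : ℝ) / 2)))) atTop
        (nhds (∑ m, (Nm m : ℝ) * (-((r:ℝ)/2) * Real.log (2 * Real.pi)))) :=
      tendsto_finset_sum _ fun m _ => (aux_A3 r).const_mul _
    have hB : Tendsto (fun ν : ℝ => ∑ m, ∑ n, (ν + r) * Real.log (1 + δ m n / ν)) atTop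
        (nhds (∑ m, ∑ n, δ m n)) :=
      tendsto_finset_sum _ fun m _ => tendsto_finset_sum _ fun n _ =>
        aux_B (δ m n) (r : ℝ) (hδ0 m n)
    have hC : ∀ m : Fin l, Tendsto
        (fun ν : ℝ => Real.log (max (∑ n, (w ν m n) ^ 2) (Nm m : ℝ))) atTop
        (nhds (Real.log (Nm m : ℝ))) := by
      intro m
      have hsum : Tendsto (fun ν : ℝ => ∑ n, (w ν m n) ^ 2) atTop (nhds (Nm m : ℝ)) := by
        have h := tendsto_finset_sum (Finset.univ : Finset (Fin (Nm m)))
          (fun n _ => ((aux_quot (r : ℝ) (δ m n)).pow 2))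
        simp only [one_pow, Finset.sum_const, Finset.card_univ, Fintype.card_fin,
          nsmul_eq_mul, mul_one] at h
        exact h.congr fun ν => Finset.sum_congr rfl fun n _ => by rw [hw]
      have hmax := hsum.max (tendsto_const_nhds :
        Tendsto (fun _ : ℝ => (Nm m : ℝ)) atTop (nhds (Nm m : ℝ)))
      rw [max_self] at hmax
      have hpos : (0:ℝ) < (Nm m : ℝ) := by exact_mod_cast hNm m
      exact (Real.continuousAt_log hpos.ne').tendsto.comp hmax
    have hCsum : Tendsto
        (fun ν : ℝ => ∑ m, Real.log (max (∑ n, (w ν m n) ^ 2) (Nm m : ℝ))) atTop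
        (nhds (∑ m, Real.log (Nm m : ℝ))) :=
      tendsto_finset_sum _ fun m _ => hC m
    have hAL : ∑ m, (Nm m : ℝ) * (-((r:ℝ)/2) * Real.log (2 * Real.pi))
        = -(((N : ℝ) * r / 2) * Real.log (2 * Real.pi)) := by
      rw [← Finset.sum_mul, ← hNcast]; ring
    have hpt : ((∑ m, (Nm m : ℝ) * Real.log (Nm m))
        - (∑ m, ((Nm m : ℝ) / 2) * Real.log (S m).det)
        - (q / 2) * (∑ m, Real.log (Nm m : ℝ))
        - ((N : ℝ) * r / 2) * Real.log (2 * Real.pi)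
        - (1 / 2) * (∑ m, ∑ n, δ m n))
        = ((∑ m, (Nm m : ℝ) * Real.log (Nm m))
        - (∑ m, ((Nm m : ℝ) / 2) * Real.log (S m).det)
        + (∑ m, (Nm m : ℝ) * (-((r:ℝ)/2) * Real.log (2 * Real.pi)))
        - (1 / 2) * (∑ m, ∑ n, δ m n)
        - (q / 2) * (∑ m, Real.log (Nm m : ℝ))) := by
      rw [hAL]; ring
    rw [hpt]
    exact ((tendsto_const_nhds.add hA).sub (hB.const_mul _)).sub (hCsum.const_mul _)
  · -- the scatter identity
    intro hsc
    have hdm : ∀ m, ∑ n, δ m n = (Nm m : ℝ) * r := by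
      intro m
      have hNmpos : (0:ℝ) < (Nm m : ℝ) := by exact_mod_cast hNm m
      have hT : (∑ n, vecMulVec (x m n - μ m) (x m n - μ m)) = (Nm m : ℝ) • S m := by
        rw [hsc m, smul_smul, mul_inv_cancel₀ hNmpos.ne', one_smul]
      have hinv : (S m)⁻¹ * S m = 1 :=
        Matrix.nonsing_inv_mul _ (isUnit_iff_ne_zero.mpr (hS m).det_pos.ne')
      calc ∑ n, δ m n
          = ∑ n, ((S m)⁻¹ * vecMulVec (x m n - μ m) (x m n - μ m)).trace := by
            refine Finset.sum_congr rfl fun n _ => ?_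
            rw [hδ m n, aux_trace]
        _ = ((S m)⁻¹ * ∑ n, vecMulVec (x m n - μ m) (x m n - μ m)).trace := by
            rw [Finset.mul_sum, Matrix.trace_sum]
        _ = (Nm m : ℝ) * r := by
            rw [hT, Matrix.mul_smul, hinv, Matrix.trace_smul, Matrix.trace_one]
            simp
    have hsumδ : ∑ m, ∑ n, δ m n = (N : ℝ) * r := by
      calc ∑ m, ∑ n, δ m n = ∑ m, (Nm m : ℝ) * r :=
            Finset.sum_congr rfl fun m _ => hdm m
        _ = (∑ m, (Nm m : ℝ)) * r := by rw [Finset.sum_mul]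
        _ = (N : ℝ) * r := by rw [hNcast]
    rw [hsumδ]
    ring
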